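/- arXiv:2504.02325 — 3 statements merged into one kernel-verified Lean document; each statement's English description precedes it below -/
import Mathlib

section
/- Let n, k, m, s, d, n', k' be integers with n > 0, 1 ≤ k ≤ n, d = gcd(n,k), (n/d)·k' − (k/d)·n' = 1, |s| = |m·n − k²|, and suppose the three integers (m·n − k²)/d, k·k' − n'·m, and d have greatest common divisor 1. Then: (i) if n and s are both odd, k and m have different parities; (ii) if n and s are both even, then k is even and m is odd. -/
/-- Parity constraints on the winding number `k` and surgery coefficient `m`
when `m`-surgery on a knot of winding number `k` in `L(n,1)` yields `L(s,1)`
with `n, s` of the same parity. -/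
theorem stmt_0 (n k m s d n' k' : ℤ)
    (hn : 0 < n) (hk1 : 1 ≤ k) (hkn : k ≤ n)
    (hd : d = Int.gcd n k)
    (hbezout : (n / d) * k' - (k / d) * n' = 1)
    (hs : |s| = |m * n - k ^ 2|)
    (hgcd : Int.gcd ((m * n - k ^ 2) / d) (Int.gcd (k * k' - n' * m) d) = 1) :
    (Odd n → Odd s → ¬ (Even k ↔ Even m)) ∧
    (Even n → Even s → Even k ∧ Odd m) := by
  have hd0 : 0 < d := by
    rw [hd]
    exact_mod_cast Int.gcd_pos_of_ne_zero_left k hn.ne'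
  have hdn : d ∣ n := hd ▸ Int.gcd_dvd_left n k
  have hdk : d ∣ k := hd ▸ Int.gcd_dvd_right n k
  constructor
  · intro hno hso hiff
    have hodd : Odd (m * n - k ^ 2) := by
      rw [← odd_abs, ← hs, odd_abs]; exact hso
    have h2 : ¬ Even (m * n - k ^ 2) := (Int.not_even_iff_odd).mpr hodd
    rw [Int.even_sub, Int.even_mul, Int.even_pow] at h2
    have hne : ¬ Even n := (Int.not_even_iff_odd).mpr hno
    tauto
  · intro hne hse
    have heven : Even (m * n - k ^ 2) := by
      rw [← even_abs, ← hs, even_abs]; exact hse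
    have hk_even : Even k := by
      rw [Int.even_sub, Int.even_mul, Int.even_pow] at heven
      tauto
    refine ⟨hk_even, ?_⟩
    by_contra hm
    rw [Int.not_odd_iff_even] at hm
    have hk2 : (2 : ℤ) ∣ k := hk_even.two_dvd
    have hm2 : (2 : ℤ) ∣ m := hm.two_dvd
    have hn2 : (2 : ℤ) ∣ n := hne.two_dvd
    have h2d : (2 : ℤ) ∣ d := hd ▸ Int.dvd_coe_gcd hn2 hk2
    obtain ⟨b, hb⟩ := hdn
    obtain ⟨a, ha⟩ := hdk
    have key : m * n - k ^ 2 = d * (m * b - a * k) := by rw [hb, ha]; ring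
    have h2A : (2 : ℤ) ∣ (m * n - k ^ 2) / d := by
      rw [key, Int.mul_ediv_cancel_left _ hd0.ne']
      exact dvd_sub (hm2.mul_right b) (hk2.mul_left a)
    have h2B : (2 : ℤ) ∣ k * k' - n' * m :=
      dvd_sub (hk2.mul_right k') (hm2.mul_left n')
    have h2in : (2 : ℤ) ∣ (Int.gcd (k * k' - n' * m) d : ℤ) := Int.dvd_coe_gcd h2B h2d
    have h2out : (2 : ℤ) ∣ (Int.gcd ((m * n - k ^ 2) / d) (Int.gcd (k * k' - n' * m) d) : ℤ) :=
      Int.dvd_coe_gcd h2A h2in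
    rw [hgcd] at h2out
    norm_num at h2out
end

section
/- Let n and k be integers with k ≥ 2, and set p = n·k − n − k². If p ≥ 1, then the Dedekind sum satisfies s(k − 1, p) = (1/12)·((n − 2)/p + n − 8) as rational numbers, i.e., ∑_{j=1}^{p−1} ((j/p))·(((k−1)·j/p)) = (1/12)·((n − 2)/p + n − 8). -/
/-- The sawtooth function `((x)) = x - ⌊x⌋ - 1/2` for non-integral `x`,
and `((x)) = 0` for integral `x`. -/
def sawtooth (x : ℚ) : ℚ := if x.den = 1 then 0 else x - ⌊x⌋ - 1 / 2

/-- The Dedekind sum `s(q,p) = ∑_{j=1}^{p-1} ((j/p)) ((qj/p))`. -/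
noncomputable def dedekindSum (q p : ℤ) : ℚ :=
  ∑ j ∈ Finset.Icc (1 : ℤ) (p - 1), sawtooth ((j : ℚ) / p) * sawtooth ((q * j : ℚ) / p)

private lemma sawtooth_fract (x : ℚ) (h : Int.fract x ≠ 0) :
    sawtooth x = Int.fract x - 1 / 2 := by
  have hden : x.den ≠ 1 := by
    intro hd
    apply h
    rw [← (Rat.den_eq_one_iff x).mp hd]
    exact Int.fract_intCast _
  unfold sawtooth
  rw [if_neg hden, ← Int.self_sub_floor]

private lemma sum_quad (M : ℤ) (hM : 0 ≤ M) (a b c : ℚ) :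
    ∑ d ∈ Finset.Ico (0:ℤ) M, (a + b * (d:ℚ) + c * (d:ℚ)^2)
      = a * (M:ℚ) + b * ((M:ℚ)*((M:ℚ)-1)/2) + c * ((M:ℚ)*((M:ℚ)-1)*(2*(M:ℚ)-1)/6) := by
  refine Int.le_induction (motive := fun M _ => ∑ d ∈ Finset.Ico (0:ℤ) M, (a + b * (d:ℚ) + c * (d:ℚ)^2)
      = a * (M:ℚ) + b * ((M:ℚ)*((M:ℚ)-1)/2) + c * ((M:ℚ)*((M:ℚ)-1)*(2*(M:ℚ)-1)/6)) ?_ ?_ M hM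
  · norm_num
  · intro M hM ih
    have hins : Finset.Ico (0:ℤ) (M+1) = insert M (Finset.Ico 0 M) := by
      ext x
      simp only [Finset.mem_Ico, Finset.mem_insert]
      omega
    rw [hins, Finset.sum_insert (by simp), ih]
    push_cast
    ring

private lemma sum_quad2 (N M : ℤ) (hN : 0 ≤ N) (hM : 0 ≤ M) (a b c e f g : ℚ) :
    ∑ x ∈ Finset.Ico (0:ℤ) N, ∑ y ∈ Finset.Ico (0:ℤ) M,
      (a + b*(x:ℚ) + c*(y:ℚ) + e*(x:ℚ)*(y:ℚ) + f*(x:ℚ)^2 + g*(y:ℚ)^2)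
    = a*((N:ℚ)*(M:ℚ)) + b*((N:ℚ)*((N:ℚ)-1)/2*(M:ℚ)) + c*((N:ℚ)*((M:ℚ)*((M:ℚ)-1)/2))
      + e*((N:ℚ)*((N:ℚ)-1)/2*((M:ℚ)*((M:ℚ)-1)/2))
      + f*((N:ℚ)*((N:ℚ)-1)*(2*(N:ℚ)-1)/6*(M:ℚ))
      + g*((N:ℚ)*((M:ℚ)*((M:ℚ)-1)*(2*(M:ℚ)-1)/6)) := by
  have h1 : ∀ x : ℤ, ∑ y ∈ Finset.Ico (0:ℤ) M,
      (a + b*(x:ℚ) + c*(y:ℚ) + e*(x:ℚ)*(y:ℚ) + f*(x:ℚ)^2 + g*(y:ℚ)^2)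
      = (a + b*(x:ℚ) + f*(x:ℚ)^2)*(M:ℚ) + (c + e*(x:ℚ))*((M:ℚ)*((M:ℚ)-1)/2)
        + g*((M:ℚ)*((M:ℚ)-1)*(2*(M:ℚ)-1)/6) := by
    intro x
    rw [← sum_quad M hM (a + b*(x:ℚ) + f*(x:ℚ)^2) (c + e*(x:ℚ)) g]
    exact Finset.sum_congr rfl fun y _ => by ring
  rw [Finset.sum_congr rfl fun x _ => h1 x]
  have h2 : ∀ x : ℤ,
      (a + b*(x:ℚ) + f*(x:ℚ)^2)*(M:ℚ) + (c + e*(x:ℚ))*((M:ℚ)*((M:ℚ)-1)/2)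
        + g*((M:ℚ)*((M:ℚ)-1)*(2*(M:ℚ)-1)/6)
      = (a*(M:ℚ) + c*((M:ℚ)*((M:ℚ)-1)/2) + g*((M:ℚ)*((M:ℚ)-1)*(2*(M:ℚ)-1)/6))
        + (b*(M:ℚ) + e*((M:ℚ)*((M:ℚ)-1)/2))*(x:ℚ) + (f*(M:ℚ))*(x:ℚ)^2 := fun x => by ring
  rw [Finset.sum_congr rfl fun x _ => h2 x, sum_quad N hN]
  ring

set_option maxHeartbeats 1600000 in
private lemma dedekind_eval (n k p : ℤ) (hk : 2 ≤ k) (hp : p = n * k - n - k ^ 2)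
    (hp1 : 1 ≤ p) :
    ∑ j ∈ Finset.Icc (1 : ℤ) (p - 1),
        sawtooth ((j : ℚ) / p) * sawtooth (((k - 1 : ℤ) * j : ℚ) / p) =
      (1 / 12) * (((n : ℚ) - 2) / p + (n : ℚ) - 8) := by
  set q : ℤ := k - 1 with hq
  set m : ℤ := n - k - 1 with hmdef
  have hqm : q * m = p + 1 := by rw [hp, hq, hmdef]; ring
  have hq1 : 1 ≤ q := by omega
  have hm1 : 1 ≤ m := by nlinarith
  have hp0 : (0:ℤ) < p := hp1
  have hP : (0:ℚ) < (p:ℚ) := by exact_mod_cast hp0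
  have hPne : (p:ℚ) ≠ 0 := ne_of_gt hP
  have hdv : ∀ j : ℤ, p ∣ q * j → p ∣ j := by
    intro j hj
    have h1 : p ∣ m * (q * j) := hj.mul_left m
    have h2 : j = m * (q * j) - p * j := by linear_combination (-j) * hqm
    rw [h2]
    exact dvd_sub h1 (dvd_mul_right p j)
  -- Step 1 : rewrite the summand
  have step1 : ∀ j ∈ Finset.Icc (1:ℤ) (p-1),
      sawtooth ((j : ℚ) / p) * sawtooth ((q : ℚ) * (j : ℚ) / p)
        = ((j:ℚ)/p - 1/2) * (((j / m + q * (j % m) : ℤ) : ℚ)/p - 1/2) := by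
    intro j hj
    rw [Finset.mem_Icc] at hj
    obtain ⟨hj1, hj2⟩ := hj
    have hjQ : (0:ℚ) < (j:ℚ) := by exact_mod_cast (by omega : (0:ℤ) < j)
    have hjltp : (j:ℚ) < (p:ℚ) := by exact_mod_cast (by omega : j < p)
    have hfr1 : Int.fract ((j:ℚ)/p) = (j:ℚ)/p := by
      rw [Int.fract_eq_self]
      exact ⟨by positivity, by rw [div_lt_one hP]; exact hjltp⟩
    have hne1 : Int.fract ((j:ℚ)/p) ≠ 0 := by
      rw [hfr1]
      positivity
    -- decomposition of j
    have hrdecomp : m * (j / m) + j % m = j := Int.mul_ediv_add_emod j m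
    set c := j / m with hc
    set d := j % m with hd
    have hd0 : 0 ≤ d := Int.emod_nonneg j (by omega)
    have hdm : d < m := Int.emod_lt_of_pos j (by omega)
    have hc0 : 0 ≤ c := Int.ediv_nonneg (by omega) (by omega)
    have hcq : c < q := by
      rw [hc, Int.ediv_lt_iff_lt_mul (by omega : (0:ℤ) < m)]
      nlinarith
    have hcd0 : 0 ≤ c + q * d := by positivity
    have hcd_lt : c + q * d < p := by
      rcases (by omega : d ≤ m - 2 ∨ d = m - 1) with h | h
      · nlinarith [mul_le_mul_of_nonneg_left h (by omega : (0:ℤ) ≤ q)]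
      · have hc2 : c ≤ q - 2 := by
          by_contra hcon
          have hcc : c = q - 1 := by omega
          have : j = p := by
            rw [← hrdecomp, hcc, h]
            linear_combination hqm
          omega
        nlinarith
    have hmod : q * j % p = c + q * d := by
      have hqj : q * j = (c + q * d) + c * p := by
        linear_combination (-q) * hrdecomp + c * hqm
      rw [hqj, Int.add_mul_emod_self_right]
      exact Int.emod_eq_of_lt hcd0 hcd_lt
    -- the second sawtooth
    have hr0 : 0 ≤ q * j % p := Int.emod_nonneg _ (by omega)
    have hrp : q * j % p < p := Int.emod_lt_of_pos _ hp0
    have hrne : q * j % p ≠ 0 := by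
      intro h0
      have h1 : p ∣ q * j := Int.dvd_of_emod_eq_zero h0
      have h2 := Int.le_of_dvd (by omega) (hdv j h1)
      omega
    have hdiv : p * (q * j / p) + q * j % p = q * j := Int.mul_ediv_add_emod (q * j) p
    have hcast : (q : ℚ) * (j : ℚ) / p
        = ((q * j / p : ℤ) : ℚ) + ((q * j % p : ℤ) : ℚ) / p := by
      have hZ : ((q * j / p : ℤ) : ℚ) * (p:ℚ) + ((q * j % p : ℤ) : ℚ) = (q:ℚ) * (j:ℚ) := by
        have : (q * j / p) * p + q * j % p = q * j := by linarith [hdiv]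
        exact_mod_cast congrArg (fun z : ℤ => (z : ℚ)) this
      field_simp
      linarith [hZ]
    have hfr2 : Int.fract ((q : ℚ) * (j : ℚ) / p) = ((q * j % p : ℤ) : ℚ) / p := by
      rw [hcast, Int.fract_intCast_add, Int.fract_eq_self.mpr]
      constructor
      · have : (0:ℚ) ≤ ((q * j % p : ℤ) : ℚ) := by exact_mod_cast hr0
        positivity
      · rw [div_lt_one hP]
        exact_mod_cast hrp
    have hne2 : Int.fract ((q : ℚ) * (j : ℚ) / p) ≠ 0 := by
      rw [hfr2]
      have h1 : ((q * j % p : ℤ) : ℚ) ≠ 0 := by exact_mod_cast hrne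
      exact div_ne_zero h1 hPne
    rw [sawtooth_fract _ hne1, sawtooth_fract _ hne2, hfr1, hfr2, hmod]
  rw [Finset.sum_congr rfl step1]
  -- Step 2 : extend the sum to Icc 0 p
  have hins : Finset.Icc (0:ℤ) p = insert 0 (insert p (Finset.Icc 1 (p-1))) := by
    ext x
    simp only [Finset.mem_Icc, Finset.mem_insert]
    omega
  have h0ni : (0:ℤ) ∉ insert p (Finset.Icc 1 (p-1)) := by
    simp only [Finset.mem_insert, Finset.mem_Icc]
    omega
  have hpni : p ∉ Finset.Icc (1:ℤ) (p-1) := by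
    simp only [Finset.mem_Icc]
    omega
  have hF0 : (((0:ℤ):ℚ)/p - 1/2) * ((((0:ℤ) / m + q * ((0:ℤ) % m) : ℤ) : ℚ)/p - 1/2) = 1/4 := by
    norm_num [Int.zero_ediv, Int.zero_emod]
  have hpe : p = (m - 1) + (q - 1) * m := by linear_combination -hqm
  have hdivp : p / m = q - 1 := by
    rw [hpe, Int.add_mul_ediv_right _ _ (by omega : m ≠ 0),
      Int.ediv_eq_zero_of_lt (by omega) (by omega), zero_add]
  have hmodp : p % m = m - 1 := by
    conv_lhs => rw [hpe]
    rw [Int.add_mul_emod_self_right]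
    exact Int.emod_eq_of_lt (by omega) (by omega)
  have hFp : (((p:ℤ):ℚ)/p - 1/2) * (((p / m + q * (p % m) : ℤ) : ℚ)/p - 1/2) = 1/4 := by
    rw [hdivp, hmodp]
    have h1 : (q - 1 + q * (m - 1) : ℤ) = p := by linear_combination hqm
    rw [h1, div_self hPne]
    norm_num
  have hsum0p : ∑ j ∈ Finset.Icc (0:ℤ) p,
        (((j:ℚ)/p - 1/2) * (((j / m + q * (j % m) : ℤ) : ℚ)/p - 1/2))
      = 1/4 + (1/4 + ∑ j ∈ Finset.Icc (1:ℤ) (p-1),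
          (((j:ℚ)/p - 1/2) * (((j / m + q * (j % m) : ℤ) : ℚ)/p - 1/2))) := by
    rw [hins, Finset.sum_insert h0ni, Finset.sum_insert hpni, hF0, hFp]
  -- Step 3 : reindex by pairs
  have hm0 : (0:ℤ) ≤ m := by omega
  have hq0 : (0:ℤ) ≤ q := by omega
  have hbij : ∑ j ∈ Finset.Icc (0:ℤ) p,
        (((j:ℚ)/p - 1/2) * (((j / m + q * (j % m) : ℤ) : ℚ)/p - 1/2))
      = ∑ cd ∈ Finset.Ico (0:ℤ) q ×ˢ Finset.Ico (0:ℤ) m,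
          ((((cd.1 * m + cd.2 : ℤ) : ℚ))/p - 1/2) * (((cd.1 + q * cd.2 : ℤ) : ℚ)/p - 1/2) := by
    refine Finset.sum_nbij' (fun j => (j / m, j % m)) (fun cd => cd.1 * m + cd.2)
      ?_ ?_ ?_ ?_ ?_
    · intro j hjm
      rw [Finset.mem_Icc] at hjm
      show (j / m, j % m) ∈ Finset.Ico (0:ℤ) q ×ˢ Finset.Ico (0:ℤ) m
      rw [Finset.mem_product, Finset.mem_Ico, Finset.mem_Ico]
      refine ⟨⟨Int.ediv_nonneg (by omega) hm0, ?_⟩,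
        Int.emod_nonneg j (by omega), Int.emod_lt_of_pos j (by omega)⟩
      rw [Int.ediv_lt_iff_lt_mul (by omega : (0:ℤ) < m)]
      nlinarith
    · intro cd hcd
      rw [Finset.mem_product, Finset.mem_Ico, Finset.mem_Ico] at hcd
      obtain ⟨⟨h1, h2⟩, h3, h4⟩ := hcd
      show cd.1 * m + cd.2 ∈ Finset.Icc 0 p
      rw [Finset.mem_Icc]
      constructor
      · positivity
      · nlinarith [hqm, mul_le_mul_of_nonneg_right (show cd.1 ≤ q - 1 by omega) hm0]
    · intro j _
      show j / m * m + j % m = j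
      linarith [Int.mul_ediv_add_emod j m]
    · intro cd hcd
      rw [Finset.mem_product, Finset.mem_Ico, Finset.mem_Ico] at hcd
      obtain ⟨⟨h1, h2⟩, h3, h4⟩ := hcd
      have he : cd.1 * m + cd.2 = cd.2 + cd.1 * m := by ring
      have hdv2 : (cd.1 * m + cd.2) / m = cd.1 := by
        rw [he, Int.add_mul_ediv_right _ _ (by omega : m ≠ 0),
          Int.ediv_eq_zero_of_lt h3 h4, zero_add]
      have hmd2 : (cd.1 * m + cd.2) % m = cd.2 := by
        rw [he, Int.add_mul_emod_self_right]
        exact Int.emod_eq_of_lt h3 h4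
      exact Prod.ext hdv2 hmd2
    · intro j hjm
      have hj' : (j / m) * m + j % m = j := by linarith [Int.mul_ediv_add_emod j m]
      show _ = (((j / m * m + j % m : ℤ) : ℚ)/p - 1/2) * (((j / m + q * (j % m) : ℤ) : ℚ)/p - 1/2)
      rw [hj']
  have hsplit : ∑ cd ∈ Finset.Ico (0:ℤ) q ×ˢ Finset.Ico (0:ℤ) m,
        ((((cd.1 * m + cd.2 : ℤ) : ℚ))/p - 1/2) * (((cd.1 + q * cd.2 : ℤ) : ℚ)/p - 1/2)
      = ∑ x ∈ Finset.Ico (0:ℤ) q, ∑ y ∈ Finset.Ico (0:ℤ) m,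
          ((((x * m + y : ℤ) : ℚ))/p - 1/2) * (((x + q * y : ℤ) : ℚ)/p - 1/2) :=
    Finset.sum_product _ _ _
  -- Step 4 : evaluate the double sum
  have hquad : ∀ x ∈ Finset.Ico (0:ℤ) q, ∀ y ∈ Finset.Ico (0:ℤ) m,
      ((((x * m + y : ℤ) : ℚ))/p - 1/2) * (((x + q * y : ℤ) : ℚ)/p - 1/2)
      = 1/4 + (-(((m:ℚ)+1)/(2*(p:ℚ))))*(x:ℚ) + (-(((q:ℚ)+1)/(2*(p:ℚ))))*(y:ℚ)
        + (((q:ℚ)*(m:ℚ)+1)/(p:ℚ)^2)*(x:ℚ)*(y:ℚ) + ((m:ℚ)/(p:ℚ)^2)*(x:ℚ)^2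
        + ((q:ℚ)/(p:ℚ)^2)*(y:ℚ)^2 := by
    intro x _ y _
    push_cast
    field_simp
    ring
  have hval : ∑ x ∈ Finset.Ico (0:ℤ) q, ∑ y ∈ Finset.Ico (0:ℤ) m,
        ((((x * m + y : ℤ) : ℚ))/p - 1/2) * (((x + q * y : ℤ) : ℚ)/p - 1/2)
      = (1/4:ℚ)*((q:ℚ)*(m:ℚ)) + (-(((m:ℚ)+1)/(2*(p:ℚ))))*((q:ℚ)*((q:ℚ)-1)/2*(m:ℚ))
        + (-(((q:ℚ)+1)/(2*(p:ℚ))))*((q:ℚ)*((m:ℚ)*((m:ℚ)-1)/2))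
        + (((q:ℚ)*(m:ℚ)+1)/(p:ℚ)^2)*((q:ℚ)*((q:ℚ)-1)/2*((m:ℚ)*((m:ℚ)-1)/2))
        + ((m:ℚ)/(p:ℚ)^2)*((q:ℚ)*((q:ℚ)-1)*(2*(q:ℚ)-1)/6*(m:ℚ))
        + ((q:ℚ)/(p:ℚ)^2)*((q:ℚ)*((m:ℚ)*((m:ℚ)-1)*(2*(m:ℚ)-1)/6)) := by
    rw [Finset.sum_congr rfl fun x hx => Finset.sum_congr rfl fun y hy => hquad x hx y hy]
    exact sum_quad2 q m hq0 hm0 _ _ _ _ _ _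
  -- Step 5 : final algebra
  have hnQ : (n:ℚ) = (m:ℚ) + (q:ℚ) + 2 := by
    have : n = m + q + 2 := by omega
    exact_mod_cast this
  have hPQ : (q:ℚ) * (m:ℚ) = (p:ℚ) + 1 := by exact_mod_cast hqm
  have hfinal : (1/4:ℚ)*((q:ℚ)*(m:ℚ)) + (-(((m:ℚ)+1)/(2*(p:ℚ))))*((q:ℚ)*((q:ℚ)-1)/2*(m:ℚ))
        + (-(((q:ℚ)+1)/(2*(p:ℚ))))*((q:ℚ)*((m:ℚ)*((m:ℚ)-1)/2))
        + (((q:ℚ)*(m:ℚ)+1)/(p:ℚ)^2)*((q:ℚ)*((q:ℚ)-1)/2*((m:ℚ)*((m:ℚ)-1)/2))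
        + ((m:ℚ)/(p:ℚ)^2)*((q:ℚ)*((q:ℚ)-1)*(2*(q:ℚ)-1)/6*(m:ℚ))
        + ((q:ℚ)/(p:ℚ)^2)*((q:ℚ)*((m:ℚ)*((m:ℚ)-1)*(2*(m:ℚ)-1)/6))
        - 1/2
      = (1 / 12) * (((n : ℚ) - 2) / p + (n : ℚ) - 8) := by
    rw [hnQ]
    have hPe : (p:ℚ) = (q:ℚ)*(m:ℚ) - 1 := by linarith [hPQ]
    rw [hPe]
    have hne : (q:ℚ)*(m:ℚ) - 1 ≠ 0 := by rw [← hPe]; exact hPne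
    field_simp
    ring
  linarith [hsum0p, hbij, hsplit, hval, hfinal]

/-- For `k ≥ 2` and `p = nk - n - k² ≥ 1`, the Dedekind sum satisfies
`s(k-1, p) = (1/12)((n-2)/p + n - 8)`. -/
theorem stmt_12 (n k p : ℤ) (hk : 2 ≤ k) (hp : p = n * k - n - k ^ 2)
    (hp1 : 1 ≤ p) :
    dedekindSum (k - 1) p = (1 / 12) * (((n : ℚ) - 2) / p + (n : ℚ) - 8) ∧
    ∑ j ∈ Finset.Icc (1 : ℤ) (p - 1),
        sawtooth ((j : ℚ) / p) * sawtooth (((k - 1 : ℤ) * j : ℚ) / p) =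
      (1 / 12) * (((n : ℚ) - 2) / p + (n : ℚ) - 8) := by
  have h := dedekind_eval n k p hk hp hp1
  exact ⟨h, h⟩
end

section
/- Let n be an odd integer with n ≥ 5, let s be an even integer with s ≥ 2, and let i be an integer with i = 0 or i = s/2. If, as rational numbers, (−1/4 + (2i − s)²/(4s)) − (n − 1)/4 equals 1/4 or −1/4, then i = 0 and either s = n + 1 or s = n − 1. -/
/-- Arithmetic core of the different-parity case: for odd `n ≥ 5` and even
`s ≥ 2`, if the difference of d-invariants `d(L(s,1), i) - d(L(n,1), 0)` is
`±1/4` at a self-conjugate Spin^c structure `i ∈ {0, s/2}`, then `i = 0` and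
`s = n ± 1`. -/
theorem stmt_18 (n s i : ℤ) (hn : Odd n) (hn5 : 5 ≤ n)
    (hs : Even s) (hs2 : 2 ≤ s) (hi : i = 0 ∨ i = s / 2)
    (hd : (-1 / 4 + (2 * (i : ℚ) - (s : ℚ)) ^ 2 / (4 * (s : ℚ))) - ((n : ℚ) - 1) / 4 = 1 / 4 ∨
      (-1 / 4 + (2 * (i : ℚ) - (s : ℚ)) ^ 2 / (4 * (s : ℚ))) - ((n : ℚ) - 1) / 4 = -1 / 4) :
    i = 0 ∧ (s = n + 1 ∨ s = n - 1) := by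
  have hsQ : (s : ℚ) ≠ 0 := by
    exact_mod_cast (by omega : s ≠ 0)
  have hn5Q : (5 : ℚ) ≤ (n : ℚ) := by exact_mod_cast hn5
  rcases hi with hi | hi
  · subst hi
    refine ⟨rfl, ?_⟩
    rcases hd with hd | hd
    · left
      have h0 : (s : ℚ) * ((s : ℚ) - ((n : ℚ) + 1)) = 0 := by
        field_simp at hd; linear_combination hd
      rcases mul_eq_zero.mp h0 with h | h
      · exact absurd h hsQ
      · have : (s : ℚ) = (n : ℚ) + 1 := by linarith
        exact_mod_cast this
    · right
      have h0 : (s : ℚ) * ((s : ℚ) - ((n : ℚ) - 1)) = 0 := by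
        field_simp at hd; linear_combination hd
      rcases mul_eq_zero.mp h0 with h | h
      · exact absurd h hsQ
      · have : (s : ℚ) = (n : ℚ) - 1 := by linarith
        exact_mod_cast this
  · exfalso
    rcases hs with ⟨k, hk⟩
    have hik : 2 * i = s := by omega
    have hikQ : 2 * (i : ℚ) - (s : ℚ) = 0 := by exact_mod_cast (by omega : (2*i - s : ℤ) = 0)
    rw [hikQ] at hd
    rcases hd with hd | hd <;> norm_num at hd <;> linarith
end
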